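/- Let σ > 0, μ ∈ ℝ, λ = 2μ/σ², let h : ℝ → ℝ be continuous, let d < D < U < u be reals, let K ≥ 0, L ≥ 0, k > 0, ℓ > 0, and let m ∈ ℝ. Define a₁ = ∫_d^D e^{λ(m−x)} dx, a₂ = ∫_U^u e^{λ(m−x)} dx, b₁ = −(2/σ²) ∫_d^D ∫_m^x e^{λ(y−x)} dy dx, b₂ = (2/σ²) ∫_U^u ∫_m^x e^{λ(y−x)} dy dx, c₁ = −(2/σ²) ∫_d^D ∫_m^x h(y) e^{λ(y−x)} dy dx, and c₂ = (2/σ²) ∫_U^u ∫_m^x h(y) e^{λ(y−x)} dy dx. Assume a₂b₁ + a₁b₂ ≠ 0 and set γ = (a₁(c₂ + L + ℓ(u−U)) + a₂(c₁ + K + k(D−d)))/(a₂b₁ + a₁b₂) and v = (b₁(c₂ + L + ℓ(u−U)) − b₂(c₁ + K + k(D−d)))/(a₂b₁ + a₁b₂). Define g(x) = v e^{λ(m−x)} + γ(2/σ²) ∫_m^x e^{λ(y−x)} dy − (2/σ²) ∫_m^x h(y) e^{λ(y−x)} dy and V(x) = ∫_m^x g(y) dy. Then V is twice continuously differentiable and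 satisfies (σ²/2)V''(x) + μV'(x) + h(x) = γ for every x ∈ [d, u], together with the boundary conditions V(d) − V(D) = K + k(D−d) and V(u) − V(U) = L + ℓ(u−U). -/

import Mathlib

open MeasureTheory Set Filter

noncomputable section

def A1 (lam m d D : ℝ) : ℝ := ∫ x in d..D, Real.exp (lam * (m - x))

def A2 (lam m U u : ℝ) : ℝ := ∫ x in U..u, Real.exp (lam * (m - x))

def B1 (σ lam m d D : ℝ) : ℝ :=
  -(2 / σ ^ 2) * ∫ x in d..D, (∫ y in m..x, Real.exp (lam * (y - x)))

def B2 (σ lam m U u : ℝ) : ℝ :=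
  (2 / σ ^ 2) * ∫ x in U..u, (∫ y in m..x, Real.exp (lam * (y - x)))

def C1 (σ lam m d D : ℝ) (h : ℝ → ℝ) : ℝ :=
  -(2 / σ ^ 2) * ∫ x in d..D, (∫ y in m..x, h y * Real.exp (lam * (y - x)))

def C2 (σ lam m U u : ℝ) (h : ℝ → ℝ) : ℝ :=
  (2 / σ ^ 2) * ∫ x in U..u, (∫ y in m..x, h y * Real.exp (lam * (y - x)))

def gee (σ lam m γ v : ℝ) (h : ℝ → ℝ) (x : ℝ) : ℝ :=
  v * Real.exp (lam * (m - x)) + γ * (2 / σ ^ 2) * (∫ y in m..x, Real.exp (lam * (y - x))) -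
    (2 / σ ^ 2) * ∫ y in m..x, h y * Real.exp (lam * (y - x))

def Vee (σ lam m γ v : ℝ) (h : ℝ → ℝ) (x : ℝ) : ℝ := ∫ y in m..x, gee σ lam m γ v h y

namespace Stmt17Aux

lemma primHasDerivAt {f : ℝ → ℝ} (hf : Continuous f) (m x : ℝ) :
    HasDerivAt (fun t => ∫ y in m..t, f y) (f x) x :=
  intervalIntegral.integral_hasDerivAt_right (hf.intervalIntegrable m x)
    (hf.stronglyMeasurableAtFilter _ _) hf.continuousAt

lemma inner1_eq (lam m x : ℝ) :
    (∫ y in m..x, Real.exp (lam * (y - x)))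
      = Real.exp (-(lam * x)) * ∫ y in m..x, Real.exp (lam * y) := by
  rw [← intervalIntegral.integral_const_mul]
  refine intervalIntegral.integral_congr fun y _ => ?_
  rw [show lam * (y - x) = -(lam * x) + lam * y by ring, Real.exp_add]

lemma inner2_eq (lam m x : ℝ) (h : ℝ → ℝ) :
    (∫ y in m..x, h y * Real.exp (lam * (y - x)))
      = Real.exp (-(lam * x)) * ∫ y in m..x, h y * Real.exp (lam * y) := by
  rw [← intervalIntegral.integral_const_mul]
  refine intervalIntegral.integral_congr fun y _ => ?_
  rw [show lam * (y - x) = -(lam * x) + lam * y by ring, Real.exp_add]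
  ring

lemma gee_eq (σ lam m γ v : ℝ) (h : ℝ → ℝ) (x : ℝ) :
    gee σ lam m γ v h x =
      Real.exp (-(lam * x)) *
        (v * Real.exp (lam * m) +
          γ * (2 / σ ^ 2) * (∫ y in m..x, Real.exp (lam * y)) -
          (2 / σ ^ 2) * ∫ y in m..x, h y * Real.exp (lam * y)) := by
  unfold gee
  rw [inner1_eq, inner2_eq, show lam * (m - x) = -(lam * x) + lam * m by ring, Real.exp_add]
  ring

lemma contP1 (lam m : ℝ) : Continuous (fun t : ℝ => ∫ y in m..t, Real.exp (lam * y)) := by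
  have : Differentiable ℝ (fun t : ℝ => ∫ y in m..t, Real.exp (lam * y)) :=
    fun x => (primHasDerivAt (by fun_prop) m x).differentiableAt
  exact this.continuous

lemma contP2 (lam m : ℝ) (h : ℝ → ℝ) (hcont : Continuous h) :
    Continuous (fun t : ℝ => ∫ y in m..t, h y * Real.exp (lam * y)) := by
  have : Differentiable ℝ (fun t : ℝ => ∫ y in m..t, h y * Real.exp (lam * y)) :=
    fun x => (primHasDerivAt (by fun_prop) m x).differentiableAt
  exact this.continuous

lemma gee_continuous (σ lam m γ v : ℝ) (h : ℝ → ℝ) (hcont : Continuous h) :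
    Continuous (gee σ lam m γ v h) := by
  have : gee σ lam m γ v h = fun x =>
      Real.exp (-(lam * x)) *
        (v * Real.exp (lam * m) +
          γ * (2 / σ ^ 2) * (∫ y in m..x, Real.exp (lam * y)) -
          (2 / σ ^ 2) * ∫ y in m..x, h y * Real.exp (lam * y)) :=
    funext (gee_eq σ lam m γ v h)
  rw [this]
  exact (Real.continuous_exp.comp (by fun_prop)).mul
    (((continuous_const.add (continuous_const.mul (contP1 lam m))).sub
      (continuous_const.mul (contP2 lam m h hcont))))

lemma gee_hasDerivAt (σ lam m γ v : ℝ) (h : ℝ → ℝ) (hcont : Continuous h) (x : ℝ) :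
    HasDerivAt (gee σ lam m γ v h)
      (-lam * gee σ lam m γ v h x + 2 / σ ^ 2 * (γ - h x)) x := by
  have hfun : gee σ lam m γ v h = fun x =>
      Real.exp (-(lam * x)) *
        (v * Real.exp (lam * m) +
          γ * (2 / σ ^ 2) * (∫ y in m..x, Real.exp (lam * y)) -
          (2 / σ ^ 2) * ∫ y in m..x, h y * Real.exp (lam * y)) :=
    funext (gee_eq σ lam m γ v h)
  have hP1 : HasDerivAt (fun t : ℝ => ∫ y in m..t, Real.exp (lam * y))
      (Real.exp (lam * x)) x := primHasDerivAt (by fun_prop) m x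
  have hP2 : HasDerivAt (fun t : ℝ => ∫ y in m..t, h y * Real.exp (lam * y))
      (h x * Real.exp (lam * x)) x := primHasDerivAt (by fun_prop) m x
  have hE : HasDerivAt (fun x : ℝ => Real.exp (-(lam * x)))
      (-lam * Real.exp (-(lam * x))) x := by
    have h0 : HasDerivAt (fun x : ℝ => -(lam * x)) (-lam) x := by
      simpa using (hasDerivAt_id x).const_mul (-lam)
    simpa [mul_comm] using h0.exp
  have hB : HasDerivAt (fun x : ℝ =>
      v * Real.exp (lam * m) + γ * (2 / σ ^ 2) * (∫ y in m..x, Real.exp (lam * y)) -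
        (2 / σ ^ 2) * ∫ y in m..x, h y * Real.exp (lam * y))
      (γ * (2 / σ ^ 2) * Real.exp (lam * x) - 2 / σ ^ 2 * (h x * Real.exp (lam * x))) x := by
    exact (((hasDerivAt_const x (v * Real.exp (lam * m))).add
      (hP1.const_mul (γ * (2 / σ ^ 2)))).sub (hP2.const_mul (2 / σ ^ 2))).congr_deriv (by ring)
  rw [gee_eq σ lam m γ v h x, hfun]
  have key : Real.exp (-(lam * x)) * Real.exp (lam * x) = 1 := by
    rw [← Real.exp_add]; simp
  refine (hE.mul hB).congr_deriv ?_
  linear_combination (2 / σ ^ 2 * (γ - h x)) * key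

lemma integral_gee (σ lam m γ v a b : ℝ) (h : ℝ → ℝ) (hcont : Continuous h) :
    (∫ x in a..b, gee σ lam m γ v h x) =
      v * (∫ x in a..b, Real.exp (lam * (m - x))) +
      γ * (2 / σ ^ 2) * (∫ x in a..b, (∫ y in m..x, Real.exp (lam * (y - x)))) -
      (2 / σ ^ 2) * ∫ x in a..b, (∫ y in m..x, h y * Real.exp (lam * (y - x))) := by
  have c1 : Continuous fun x : ℝ => ∫ y in m..x, Real.exp (lam * (y - x)) := by
    have : (fun x : ℝ => ∫ y in m..x, Real.exp (lam * (y - x)))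
        = fun x => Real.exp (-(lam * x)) * ∫ y in m..x, Real.exp (lam * y) :=
      funext fun x => inner1_eq lam m x
    rw [this]
    exact (Real.continuous_exp.comp (by fun_prop)).mul (contP1 lam m)
  have c2 : Continuous fun x : ℝ => ∫ y in m..x, h y * Real.exp (lam * (y - x)) := by
    have : (fun x : ℝ => ∫ y in m..x, h y * Real.exp (lam * (y - x)))
        = fun x => Real.exp (-(lam * x)) * ∫ y in m..x, h y * Real.exp (lam * y) :=
      funext fun x => inner2_eq lam m x h
    rw [this]
    exact (Real.continuous_exp.comp (by fun_prop)).mul (contP2 lam m h hcont)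
  unfold gee
  rw [intervalIntegral.integral_sub (f := fun x : ℝ => v * Real.exp (lam * (m - x)) +
          γ * (2 / σ ^ 2) * ∫ y in m..x, Real.exp (lam * (y - x)))
      (g := fun x : ℝ => (2 / σ ^ 2) * ∫ y in m..x, h y * Real.exp (lam * (y - x)))
      ((((by fun_prop : Continuous fun x : ℝ => v * Real.exp (lam * (m - x))).add
        (continuous_const.mul c1)) : Continuous fun x : ℝ => v * Real.exp (lam * (m - x)) +
          γ * (2 / σ ^ 2) * ∫ y in m..x, Real.exp (lam * (y - x))).intervalIntegrable a b)
      (((continuous_const.mul c2) : Continuous fun x : ℝ =>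
          (2 / σ ^ 2) * ∫ y in m..x, h y * Real.exp (lam * (y - x))).intervalIntegrable a b),
    intervalIntegral.integral_add (f := fun x : ℝ => v * Real.exp (lam * (m - x)))
        (g := fun x : ℝ => γ * (2 / σ ^ 2) * ∫ y in m..x, Real.exp (lam * (y - x)))
      ((by fun_prop : Continuous fun x : ℝ => v * Real.exp (lam * (m - x))).intervalIntegrable a b)
      (((continuous_const.mul c1) : Continuous fun x : ℝ =>
          γ * (2 / σ ^ 2) * ∫ y in m..x, Real.exp (lam * (y - x))).intervalIntegrable a b),
    intervalIntegral.integral_const_mul, intervalIntegral.integral_const_mul,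
    intervalIntegral.integral_const_mul]

end Stmt17Aux

open Stmt17Aux in
theorem stmt17 (σ μ : ℝ) (hσ : 0 < σ) (h : ℝ → ℝ) (hcont : Continuous h)
    (d D U u K L k ℓ m : ℝ) (hdD : d < D) (hDU : D < U) (hUu : U < u)
    (hK : 0 ≤ K) (hL : 0 ≤ L) (hk : 0 < k) (hl : 0 < ℓ) :
    ∀ lam : ℝ, lam = 2 * μ / σ ^ 2 →
    A2 lam m U u * B1 σ lam m d D + A1 lam m d D * B2 σ lam m U u ≠ 0 →
    ∀ γ v : ℝ,
      γ = (A1 lam m d D * (C2 σ lam m U u h + L + ℓ * (u - U)) +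
           A2 lam m U u * (C1 σ lam m d D h + K + k * (D - d))) /
          (A2 lam m U u * B1 σ lam m d D + A1 lam m d D * B2 σ lam m U u) →
      v = (B1 σ lam m d D * (C2 σ lam m U u h + L + ℓ * (u - U)) -
           B2 σ lam m U u * (C1 σ lam m d D h + K + k * (D - d))) /
          (A2 lam m U u * B1 σ lam m d D + A1 lam m d D * B2 σ lam m U u) →
      ContDiff ℝ 2 (Vee σ lam m γ v h) ∧
      (∀ x ∈ Set.Icc d u,
        σ ^ 2 / 2 * deriv (deriv (Vee σ lam m γ v h)) x +
          μ * deriv (Vee σ lam m γ v h) x + h x = γ) ∧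
      Vee σ lam m γ v h d - Vee σ lam m γ v h D = K + k * (D - d) ∧
      Vee σ lam m γ v h u - Vee σ lam m γ v h U = L + ℓ * (u - U) := by
  intro lam hlam hΔ γ v hγ hv
  have hσ2 : σ ^ 2 ≠ 0 := pow_ne_zero 2 hσ.ne'
  have gcont : Continuous (gee σ lam m γ v h) := gee_continuous σ lam m γ v h hcont
  have hVd : ∀ x : ℝ, HasDerivAt (Vee σ lam m γ v h) (gee σ lam m γ v h x) x :=
    fun x => primHasDerivAt gcont m x
  have hderivV : deriv (Vee σ lam m γ v h) = gee σ lam m γ v h :=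
    funext fun x => (hVd x).deriv
  have hderivg : deriv (gee σ lam m γ v h)
      = fun x => -lam * gee σ lam m γ v h x + 2 / σ ^ 2 * (γ - h x) :=
    funext fun x => (gee_hasDerivAt σ lam m γ v h hcont x).deriv
  refine ⟨?_, ?_, ?_, ?_⟩
  · rw [show (2 : WithTop ℕ∞) = 1 + 1 from rfl, contDiff_succ_iff_deriv]
    refine ⟨fun x => (hVd x).differentiableAt, by simp, ?_⟩
    rw [hderivV, contDiff_one_iff_deriv]
    refine ⟨fun x => (gee_hasDerivAt σ lam m γ v h hcont x).differentiableAt, ?_⟩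
    rw [hderivg]
    exact (continuous_const.mul gcont).add
      (continuous_const.mul (continuous_const.sub hcont))
  · intro x hx
    rw [hderivV, hderivg]
    simp only []
    subst hlam
    field_simp
    ring
  · have hsplit : (∫ y in m..d, gee σ lam m γ v h y) + ∫ y in d..D, gee σ lam m γ v h y
        = ∫ y in m..D, gee σ lam m γ v h y :=
      intervalIntegral.integral_add_adjacent_intervals
        (gcont.intervalIntegrable m d) (gcont.intervalIntegrable d D)
    have h1 : Vee σ lam m γ v h d - Vee σ lam m γ v h D
        = -(∫ x in d..D, gee σ lam m γ v h x) := by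
      show (∫ y in m..d, gee σ lam m γ v h y) - (∫ y in m..D, gee σ lam m γ v h y) = _
      linarith [hsplit]
    rw [h1, integral_gee σ lam m γ v d D h hcont,
      show (∫ x in d..D, Real.exp (lam * (m - x))) = A1 lam m d D from rfl,
      show γ * (2 / σ ^ 2) * (∫ x in d..D, (∫ y in m..x, Real.exp (lam * (y - x))))
        = -γ * B1 σ lam m d D by rw [B1]; ring,
      show (2 / σ ^ 2) * (∫ x in d..D, (∫ y in m..x, h y * Real.exp (lam * (y - x))))
        = -(C1 σ lam m d D h) by rw [C1]; ring,
      hγ, hv]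
    linear_combination (C1 σ lam m d D h + K + k * (D - d)) * mul_inv_cancel₀ hΔ
  · have hsplit : (∫ y in m..U, gee σ lam m γ v h y) + ∫ y in U..u, gee σ lam m γ v h y
        = ∫ y in m..u, gee σ lam m γ v h y :=
      intervalIntegral.integral_add_adjacent_intervals
        (gcont.intervalIntegrable m U) (gcont.intervalIntegrable U u)
    have h1 : Vee σ lam m γ v h u - Vee σ lam m γ v h U
        = ∫ x in U..u, gee σ lam m γ v h x := by
      show (∫ y in m..u, gee σ lam m γ v h y) - (∫ y in m..U, gee σ lam m γ v h y) = _
      linarith [hsplit]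
    rw [h1, integral_gee σ lam m γ v U u h hcont,
      show (∫ x in U..u, Real.exp (lam * (m - x))) = A2 lam m U u from rfl,
      show γ * (2 / σ ^ 2) * (∫ x in U..u, (∫ y in m..x, Real.exp (lam * (y - x))))
        = γ * B2 σ lam m U u by rw [B2]; ring,
      show (2 / σ ^ 2) * (∫ x in U..u, (∫ y in m..x, h y * Real.exp (lam * (y - x))))
        = C2 σ lam m U u h from rfl,
      hγ, hv]
    linear_combination (C2 σ lam m U u h + L + ℓ * (u - U)) * mul_inv_cancel₀ hΔ
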